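/- Simplex lemma in the function-field setting: let t > 0, M_k > (2n-1)M, x_0 ∈ Z_O^n, and define S = {v ∈ F_q[X]^{n+1} : ||g_t u_{x_0} v|| < e^{-M_k + (2n-1)M}}. Then S is contained in a K-linear hyperplane of K^{n+1}. -/

import Mathlib

open scoped Classical ENNReal
noncomputable section

/-- The absolute value on `K = 𝔽_q((X⁻¹))`, modelled as Laurent series in `T = X⁻¹`:
`|x| = e^{-(order of x)}`, so that `|X| = e`. -/
def kabs {Fq : Type} [Field Fq] (x : LaurentSeries Fq) : ℝ :=
  if x = 0 then 0 else Real.exp (-(x.order : ℝ))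

lemma kabs_nonneg {Fq : Type} [Field Fq] (x : LaurentSeries Fq) : 0 ≤ kabs x := by
  unfold kabs; split <;> positivity

lemma kabs_eq_zero {Fq : Type} [Field Fq] {x : LaurentSeries Fq} :
    kabs x = 0 ↔ x = 0 := by
  unfold kabs; split
  · simp_all
  · simp_all [Real.exp_ne_zero]

lemma kabs_neg {Fq : Type} [Field Fq] (x : LaurentSeries Fq) : kabs (-x) = kabs x := by
  unfold kabs
  simp [HahnSeries.order_neg, neg_eq_zero]

lemma kabs_add_le {Fq : Type} [Field Fq] (x y : LaurentSeries Fq) :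
    kabs (x + y) ≤ max (kabs x) (kabs y) := by
  by_cases hx : x = 0
  · simp [hx, le_max_iff, le_refl]
  by_cases hy : y = 0
  · simp [hy, le_max_iff, le_refl]
  by_cases hxy : x + y = 0
  · simp only [hxy, kabs, if_pos rfl, le_max_iff]
    left; exact kabs_nonneg x |>.trans (by simp [kabs, hx, le_refl])
  · have h := HahnSeries.min_order_le_order_add hxy
    simp only [kabs, if_neg hx, if_neg hy, if_neg hxy, le_max_iff]
    rcases le_total x.order y.order with h' | h'
    · left
      apply Real.exp_le_exp.2
      have : x.order ≤ (x + y).order := le_trans (by simp [min_eq_left h']) h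
      have h2 : (x.order : ℝ) ≤ ((x + y).order : ℝ) := by exact_mod_cast this
      linarith
    · right
      apply Real.exp_le_exp.2
      have : y.order ≤ (x + y).order := le_trans (by simp [min_eq_right h']) h
      have h2 : (y.order : ℝ) ≤ ((x + y).order : ℝ) := by exact_mod_cast this
      linarith

instance (priority := 10000) kMetric (Fq : Type) [Field Fq] :
    MetricSpace (LaurentSeries Fq) where
  dist x y := kabs (x - y)
  dist_self x := by simp [kabs]
  dist_comm x y := by
    show kabs (x - y) = kabs (y - x)
    have h : x - y = -(y - x) := by ring
    rw [h, kabs_neg]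
  dist_triangle x y z := by
    have h := kabs_add_le (x - y) (y - z)
    rw [sub_add_sub_cancel] at h
    exact h.trans (max_le (le_add_of_nonneg_right (kabs_nonneg _))
      (le_add_of_nonneg_left (kabs_nonneg _)))
  eq_of_dist_eq_zero h := sub_eq_zero.mp (kabs_eq_zero.mp h)

/-- The embedding of `𝔽_q[X]` into `K`, sending `X` to `T⁻¹`. -/
def polyK (Fq : Type) [Field Fq] : Polynomial Fq →+* LaurentSeries Fq :=
  (Polynomial.aeval (HahnSeries.single (-1 : ℤ) (1 : Fq))).toRingHom

/-- The element `X` of `K`. -/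
def Xe (Fq : Type) [Field Fq] : LaurentSeries Fq := HahnSeries.single (-1 : ℤ) 1

/-- Sup norm on `K^m`. -/
def supNorm {Fq : Type} [Field Fq] {m : ℕ} (v : Fin m → LaurentSeries Fq) : ℝ :=
  ⨆ i, kabs (v i)

/-- The diagonal flow `g_t = diag(X^{-nt}, X^t, …, X^t)`. -/
def gMat (Fq : Type) [Field Fq] (n : ℕ) (t : ℤ) :
    Matrix (Fin (n+1)) (Fin (n+1)) (LaurentSeries Fq) :=
  Matrix.diagonal (fun i => if i = 0 then Xe Fq ^ (-(n : ℤ) * t) else Xe Fq ^ t)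

/-- The unipotent matrix `u_x` with first column `(1, -x_1, …, -x_n)ᵀ`. -/
def uMat {Fq : Type} [Field Fq] {n : ℕ} (x : Fin n → LaurentSeries Fq) :
    Matrix (Fin (n+1)) (Fin (n+1)) (LaurentSeries Fq) :=
  Matrix.of fun i j =>
    if i = j then 1 else if hi : i = 0 then 0 else if j = 0 then -x (i.pred hi) else 0

/-- The integer vector `(g, f_1, …, f_n)` associated to a rational point. -/
def assocVec {Fq : Type} [Field Fq] {n : ℕ} (f : Fin n → Polynomial Fq)
    (g : Polynomial Fq) : Fin (n+1) → LaurentSeries Fq :=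
  Fin.cons (polyK Fq g) fun i => polyK Fq (f i)

/-- The height `H(v) = max(|g|, |f_1|, …, |f_n|)`. -/
def height {Fq : Type} [Field Fq] {n : ℕ} (f : Fin n → Polynomial Fq)
    (g : Polynomial Fq) : ℝ :=
  supNorm (assocVec f g)

/-- The rational point `(f_1/g, …, f_n/g) ∈ K^n`. -/
def ratPt {Fq : Type} [Field Fq] {n : ℕ} (f : Fin n → Polynomial Fq)
    (g : Polynomial Fq) : Fin n → LaurentSeries Fq :=
  fun i => polyK Fq (f i) / polyK Fq g

/-- Points of the lattice `A · 𝔽_q[X]^m` in `K^m`. -/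
def latticePts {Fq : Type} [Field Fq] {m : ℕ}
    (A : Matrix (Fin m) (Fin m) (LaurentSeries Fq)) :
    Set (Fin m → LaurentSeries Fq) :=
  {w | ∃ p : Fin m → Polynomial Fq, w = A.mulVec fun i => polyK Fq (p i)}

/-- First minimum of the lattice `A · 𝔽_q[X]^m`. -/
def lambda1 {Fq : Type} [Field Fq] {m : ℕ}
    (A : Matrix (Fin m) (Fin m) (LaurentSeries Fq)) : ℝ :=
  sInf {r | ∃ w ∈ latticePts A, w ≠ 0 ∧ r = supNorm w}

/-- `i`-th successive minimum of the lattice `A · 𝔽_q[X]^m`. -/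
def succMin {Fq : Type} [Field Fq] {m : ℕ}
    (A : Matrix (Fin m) (Fin m) (LaurentSeries Fq)) (i : ℕ) : ℝ :=
  sInf {r | ∃ v : Fin i → (Fin m → LaurentSeries Fq),
    (∀ j, v j ∈ latticePts A) ∧ LinearIndependent (LaurentSeries Fq) v ∧
    ∀ j, supNorm (v j) ≤ r}

/-- `x` is `ψ`-approximable. -/
def IsPsiApprox {Fq : Type} [Field Fq] {n : ℕ} (ψ : ℝ → ℝ)
    (x : Fin n → LaurentSeries Fq) : Prop :=
  {fg : (Fin n → Polynomial Fq) × Polynomial Fq | fg.2 ≠ 0 ∧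
    supNorm (fun i => x i - polyK Fq (fg.1 i) / polyK Fq fg.2) <
      ψ (kabs (polyK Fq fg.2))}.Infinite

/-- The set `Exact(ψ)` in the ultrametric formulation. -/
def ExactSet (Fq : Type) [Field Fq] (n : ℕ) (ψ : ℝ → ℝ) :
    Set (Fin n → LaurentSeries Fq) :=
  {x | (∀ i, kabs (x i) ≤ 1) ∧
    {fg : (Fin n → Polynomial Fq) × Polynomial Fq | fg.2 ≠ 0 ∧
      supNorm (fun i => x i - polyK Fq (fg.1 i) / polyK Fq fg.2) =
        ψ (kabs (polyK Fq fg.2))}.Infinite ∧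
    ∃ G : ℝ, ∀ (f : Fin n → Polynomial Fq) (g : Polynomial Fq), g ≠ 0 →
      G ≤ kabs (polyK Fq g) →
      ψ (kabs (polyK Fq g)) ≤ supNorm fun i => x i - polyK Fq (f i) / polyK Fq g}

/-- The lower order of infinity `λ_ψ` of `ψ`. -/
def lambdaPsi (ψ : ℝ → ℝ) : ℝ≥0∞ :=
  Filter.liminf (fun s => ENNReal.ofReal (-Real.log (ψ s) / Real.log s)) Filter.atTop

section SimplexAux

variable {Fq : Type} [Field Fq]

lemma kabs_one' : kabs (1 : LaurentSeries Fq) = 1 := by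
  unfold kabs
  rw [if_neg one_ne_zero, HahnSeries.order_one]
  simp

lemma kabs_mul' (x y : LaurentSeries Fq) : kabs (x * y) = kabs x * kabs y := by
  by_cases hx : x = 0
  · simp [hx, kabs]
  by_cases hy : y = 0
  · simp [hy, kabs]
  have hxy : x * y ≠ 0 := mul_ne_zero hx hy
  unfold kabs
  rw [if_neg hxy, if_neg hx, if_neg hy, HahnSeries.order_mul hx hy]
  push_cast
  rw [neg_add, Real.exp_add]

lemma kabs_prod' {ι : Type*} (s : Finset ι) (f : ι → LaurentSeries Fq) :
    kabs (∏ i ∈ s, f i) = ∏ i ∈ s, kabs (f i) := by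
  classical
  induction s using Finset.induction_on with
  | empty => simpa using kabs_one'
  | @insert a s hnot ih =>
    rw [Finset.prod_insert hnot, Finset.prod_insert hnot, kabs_mul', ih]

lemma kabs_sum_lt' {ι : Type*} {c : ℝ} (hc : 0 < c) (s : Finset ι)
    (f : ι → LaurentSeries Fq) (h : ∀ a ∈ s, kabs (f a) < c) :
    kabs (∑ a ∈ s, f a) < c := by
  classical
  induction s using Finset.induction_on with
  | empty => simpa [kabs] using hc
  | @insert a s hnot ih =>
    rw [Finset.sum_insert hnot]
    exact lt_of_le_of_lt (kabs_add_le _ _)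
      (max_lt (h _ (Finset.mem_insert_self _ _))
        (ih fun a ha => h a (Finset.mem_insert_of_mem ha)))

lemma polyK_coeff' (g : Polynomial Fq) (k : ℕ) :
    (polyK Fq g).coeff (-(k : ℤ)) = g.coeff k := by
  classical
  have hdeg : g.natDegree < max (g.natDegree + 1) (k + 1) := lt_of_lt_of_le (Nat.lt_succ_self _) (le_max_left _ _)
  have hk : k ∈ Finset.range (max (g.natDegree + 1) (k + 1)) := by
    rw [Finset.mem_range]; exact lt_of_lt_of_le (Nat.lt_succ_self _) (le_max_right _ _)
  have h2 : ∀ i : ℕ, ((HahnSeries.single (-1 : ℤ) (1 : Fq)) ^ i) = HahnSeries.single (-(i : ℤ)) (1 : Fq) := by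
    intro i
    rw [HahnSeries.single_pow, one_pow, nsmul_eq_mul]
    ring_nf
  have h1 : polyK Fq g = ∑ i ∈ Finset.range (max (g.natDegree + 1) (k + 1)),
      HahnSeries.single (-(i : ℤ)) (g.coeff i) := by
    show (Polynomial.aeval (HahnSeries.single (-1 : ℤ) (1 : Fq))) g = _
    rw [Polynomial.aeval_def, Polynomial.eval₂_eq_sum_range' _ hdeg]
    refine Finset.sum_congr rfl fun i _ => ?_
    rw [h2 i]
    have hca : (algebraMap Fq (LaurentSeries Fq)) (g.coeff i) =
        HahnSeries.single (0 : ℤ) (g.coeff i) := by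
      show (HahnSeries.ofPowerSeries ℤ Fq) ((algebraMap Fq (PowerSeries Fq)) (g.coeff i)) = _
      rw [show (algebraMap Fq (PowerSeries Fq)) (g.coeff i) = PowerSeries.C (g.coeff i) from
        rfl, HahnSeries.ofPowerSeries_C, HahnSeries.C_apply]
    rw [hca, HahnSeries.single_mul_single, zero_add, mul_one]
  rw [h1]
  have h3 : ∀ i ∈ Finset.range (max (g.natDegree + 1) (k + 1)),
      (HahnSeries.single (-(i : ℤ)) (g.coeff i)).coeff (-(k : ℤ)) =
        if i = k then g.coeff k else 0 := by
    intro i _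
    rw [HahnSeries.coeff_single]
    by_cases hik : i = k
    · subst hik; simp
    · rw [if_neg (by simpa [neg_inj, Int.natCast_inj] using Ne.symm hik), if_neg hik]
  calc (∑ i ∈ Finset.range (max (g.natDegree + 1) (k + 1)),
          HahnSeries.single (-(i : ℤ)) (g.coeff i)).coeff (-(k : ℤ))
      = ∑ i ∈ Finset.range (max (g.natDegree + 1) (k + 1)),
          (HahnSeries.single (-(i : ℤ)) (g.coeff i)).coeff (-(k : ℤ)) := by
        exact map_sum (HahnSeries.coeff.addMonoidHom (-(k : ℤ))) _ _
    _ = ∑ i ∈ Finset.range (max (g.natDegree + 1) (k + 1)),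
          if i = k then g.coeff k else 0 := Finset.sum_congr rfl h3
    _ = g.coeff k := by rw [Finset.sum_ite_eq' _ k fun _ => g.coeff k, if_pos hk]

lemma one_le_kabs_polyK' {g : Polynomial Fq} (hg : g ≠ 0) :
    1 ≤ kabs (polyK Fq g) := by
  have h1 : (polyK Fq g).coeff (-(g.natDegree : ℤ)) ≠ 0 := by
    rw [polyK_coeff']
    exact fun h => hg (Polynomial.leadingCoeff_eq_zero.mp h)
  have hne : polyK Fq g ≠ 0 := fun h => h1 (by simp [h])
  have hord : (polyK Fq g).order ≤ -(g.natDegree : ℤ) :=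
    HahnSeries.order_le_of_coeff_ne_zero h1
  unfold kabs
  rw [if_neg hne]
  have h0 : (0 : ℝ) ≤ -((polyK Fq g).order : ℝ) := by
    have : ((polyK Fq g).order : ℝ) ≤ -(g.natDegree : ℤ) := by exact_mod_cast hord
    push_cast at this
    have : ((polyK Fq g).order : ℝ) ≤ 0 := le_trans this (neg_nonpos.2 (Nat.cast_nonneg _))
    linarith
  calc (1 : ℝ) = Real.exp 0 := Real.exp_zero.symm
    _ ≤ _ := Real.exp_le_exp.2 h0

lemma kabs_le_supNorm' {m : ℕ} (v : Fin m → LaurentSeries Fq) (i : Fin m) :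
    kabs (v i) ≤ supNorm v :=
  le_ciSup (f := fun j => kabs (v j)) (Set.Finite.bddAbove (Set.finite_range _)) i

lemma kabs_det_lt_one' {m : ℕ} (W : Matrix (Fin (m + 1)) (Fin (m + 1)) (LaurentSeries Fq))
    (h : ∀ j, supNorm (fun i => W i j) < 1) : kabs W.det < 1 := by
  classical
  rw [Matrix.det_apply]
  refine kabs_sum_lt' one_pos _ _ ?_
  intro σ _
  have hprod : kabs (∏ i, W (σ i) i) < 1 := by
    rw [kabs_prod']
    have hle : ∀ i : Fin (m + 1), kabs (W (σ i) i) ≤ supNorm (fun r => W r i) := fun i =>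
      kabs_le_supNorm' (fun r => W r i) (σ i)
    have hlt : ∀ i : Fin (m + 1), kabs (W (σ i) i) < 1 := fun i =>
      lt_of_le_of_lt (hle i) (h i)
    rw [Fin.prod_univ_succ]
    have h1 : ∏ i : Fin m, kabs (W (σ i.succ) i.succ) ≤ 1 :=
      Finset.prod_le_one (fun i _ => kabs_nonneg _) (fun i _ => (hlt i.succ).le)
    calc kabs (W (σ 0) 0) * ∏ i : Fin m, kabs (W (σ i.succ) i.succ)
        ≤ kabs (W (σ 0) 0) := mul_le_of_le_one_right (kabs_nonneg _) h1
      _ < 1 := hlt 0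
  have hcast : ∀ (u : ℤˣ) (x : LaurentSeries Fq), u • x = (u : ℤ) • x := fun u x => rfl
  rcases Int.units_eq_one_or (Equiv.Perm.sign σ) with hs | hs <;> rw [hs, hcast]
  · rw [Units.val_one, one_zsmul]; exact hprod
  · rw [Units.val_neg, Units.val_one, neg_zsmul, one_zsmul, kabs_neg]; exact hprod

lemma Xe_ne_zero' : Xe Fq ≠ 0 := HahnSeries.single_ne_zero one_ne_zero

lemma det_gMat' (n : ℕ) (t : ℤ) : (gMat Fq n t).det = 1 := by
  rw [gMat, Matrix.det_diagonal, Fin.prod_univ_succ]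
  rw [if_pos rfl]
  have h2 : ∀ i : Fin n,
      (if (i.succ : Fin (n + 1)) = 0 then Xe Fq ^ (-(n : ℤ) * t) else Xe Fq ^ t) = Xe Fq ^ t :=
    fun i => if_neg (Fin.succ_ne_zero i)
  rw [Finset.prod_congr rfl fun i _ => h2 i, Finset.prod_const, Finset.card_univ,
    Fintype.card_fin]
  rw [← zpow_natCast (Xe Fq ^ t) n, ← zpow_mul, ← zpow_add₀ (Xe_ne_zero' (Fq := Fq))]
  ring_nf
  exact zpow_zero _

lemma det_uMat' {n : ℕ} (x : Fin n → LaurentSeries Fq) : (uMat x).det = 1 := by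
  have hlow : (uMat x).BlockTriangular OrderDual.toDual := by
    intro i j hij
    have hij' : i < j := hij
    have h1 : i ≠ j := ne_of_lt hij'
    have h2 : j ≠ 0 := fun h => by rw [h] at hij'; exact (Fin.not_lt_zero i) hij'
    simp [uMat, h1, h2]
  rw [Matrix.det_of_lowerTriangular (uMat x) hlow]
  have hdiag : ∀ i : Fin (n + 1), uMat x i i = 1 := fun i => by simp [uMat]
  simp [hdiag]

end SimplexAux

set_option maxHeartbeats 1000000 in
set_option synthInstance.maxHeartbeats 200000 in
/-- Simplex lemma in the function-field setting. -/
theorem simplex_lemma (Fq : Type) [Field Fq] [Fintype Fq] (n : ℕ) (hn : 0 < n)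
    (t : ℤ) (M Mk : ℝ) (hM : 0 < M) (hMk : (2 * (n : ℝ) - 1) * M < Mk)
    (x0 : Fin n → LaurentSeries Fq) (hx0 : ∀ i, kabs (x0 i) ≤ 1) :
    ∃ φ : (Fin (n+1) → LaurentSeries Fq) →ₗ[LaurentSeries Fq] LaurentSeries Fq,
      φ ≠ 0 ∧
      ∀ p : Fin (n+1) → Polynomial Fq,
        supNorm ((gMat Fq n t * uMat x0).mulVec fun i => polyK Fq (p i)) <
          Real.exp (-Mk + (2 * (n : ℝ) - 1) * M) →
        φ (fun i => polyK Fq (p i)) = 0 := by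
  classical
  set A := gMat Fq n t * uMat x0 with hA
  set c := Real.exp (-Mk + (2 * (n : ℝ) - 1) * M) with hcdef
  have hc1 : c < 1 := by
    have h0 : -Mk + (2 * (n : ℝ) - 1) * M < 0 := by linarith
    calc c = Real.exp (-Mk + (2 * (n : ℝ) - 1) * M) := hcdef
      _ < Real.exp 0 := Real.exp_lt_exp.2 h0
      _ = 1 := Real.exp_zero
  set S : Set (Fin (n + 1) → LaurentSeries Fq) :=
    {v | (∃ p : Fin (n + 1) → Polynomial Fq, v = fun i => polyK Fq (p i)) ∧
      supNorm (A.mulVec v) < c} with hS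
  by_cases hspan : Submodule.span (LaurentSeries Fq) S = ⊤
  · exfalso
    obtain ⟨b, hbS, hbspan, hbli⟩ := exists_linearIndependent (LaurentSeries Fq) S
    rw [hspan] at hbspan
    let hbasis : Module.Basis b (LaurentSeries Fq) (Fin (n + 1) → LaurentSeries Fq) :=
      Module.Basis.mk hbli (by rw [Subtype.range_coe]; exact ge_of_eq hbspan)
    haveI : Fintype b := FiniteDimensional.fintypeBasisIndex hbasis
    have hcard : Fintype.card b = n + 1 := by
      have h1 := Module.finrank_eq_card_basis hbasis
      rw [Module.finrank_fin_fun] at h1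
      exact h1.symm
    let e : Fin (n + 1) ≃ b := (Fintype.equivFinOfCardEq hcard).symm
    let v : Fin (n + 1) → (Fin (n + 1) → LaurentSeries Fq) := fun j => (e j : _)
    have hvli : LinearIndependent (LaurentSeries Fq) v := hbli.comp e e.injective
    have hvS : ∀ j, v j ∈ S := fun j => hbS (e j).2
    have hpex : ∀ j, ∃ p : Fin (n + 1) → Polynomial Fq, v j = fun i => polyK Fq (p i) :=
      fun j => (hvS j).1
    choose p hpv using hpex
    set Q : Matrix (Fin (n + 1)) (Fin (n + 1)) (Polynomial Fq) :=
      Matrix.of fun i j => p j i with hQ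
    set P : Matrix (Fin (n + 1)) (Fin (n + 1)) (LaurentSeries Fq) :=
      Matrix.of fun i j => v j i with hP
    have hPQ : P = (polyK Fq).mapMatrix Q := by
      ext i j
      simp only [hP, hQ, RingHom.mapMatrix_apply, Matrix.map_apply, Matrix.of_apply]
      rw [hpv j]
    have hPunit : IsUnit P := by
      rw [← Matrix.linearIndependent_cols_iff_isUnit]
      have hcols : (fun j => P.transpose j) = v := by
        funext j; funext i; rfl
      change LinearIndependent _ (fun j => P.transpose j)
      rw [hcols]
      exact hvli
    have hdetP : P.det ≠ 0 := by
      have := (Matrix.isUnit_iff_isUnit_det P).1 hPunit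
      exact this.ne_zero
    have hdetQ : Q.det ≠ 0 := by
      intro h
      apply hdetP
      rw [hPQ, ← RingHom.map_det, h, map_zero]
    have h1le : 1 ≤ kabs P.det := by
      rw [hPQ, ← RingHom.map_det]
      exact one_le_kabs_polyK' hdetQ
    set W := A * P with hW
    have hWcol : ∀ j, (fun i => W i j) = A.mulVec (v j) := by
      intro j; funext i
      show (A * P) i j = A.mulVec (v j) i
      rw [Matrix.mul_apply]
      rfl
    have hWlt : ∀ j, supNorm (fun i => W i j) < 1 := fun j => by
      rw [hWcol j]; exact lt_trans (hvS j).2 hc1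
    have hdetW : kabs W.det < 1 := kabs_det_lt_one' W hWlt
    have hdetA : A.det = 1 := by
      rw [hA, Matrix.det_mul, det_gMat', det_uMat', one_mul]
    rw [hW, Matrix.det_mul, hdetA, one_mul] at hdetW
    exact absurd h1le (not_le.2 hdetW)
  · obtain ⟨φ, hφ0, hφ⟩ := Submodule.exists_dual_map_eq_bot_of_lt_top
      (lt_top_iff_ne_top.2 hspan) inferInstance
    refine ⟨φ, hφ0, fun p hp => ?_⟩
    have hmem : (fun i => polyK Fq (p i)) ∈ S := ⟨⟨p, rfl⟩, hp⟩
    have h2 : φ (fun i => polyK Fq (p i)) ∈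
        Submodule.map φ (Submodule.span (LaurentSeries Fq) S) :=
      Submodule.mem_map_of_mem (Submodule.subset_span hmem)
    rw [hφ] at h2
    simpa using h2
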